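/- arXiv:2212.09640 — 5 statements merged into one kernel-verified Lean document; each statement's English description precedes it below -/
import Mathlib

section
/- The function d(z, z') := max( log((x-x')²/(y y')), |log(y/y')| ) ∨ 0, for z = x+iy, z' = x'+iy' in the upper half plane over F, defines a pseudo-metric: it is nonnegative, symmetric, vanishes on the diagonal, and satisfies the triangle inequality. -/
/-- Brumfiel's distance on the upper half plane over a real closed ordered field `F`
with an order-compatible surjective `ℚ`-valuation `-log`:
`d(z,z') := max (log ((x-x')²/(y y'))) (|log (y/y')|) ⊔ 0` is a pseudo-metric:
nonnegative, vanishing on the diagonal, symmetric, and satisfying the triangle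
inequality. -/
theorem brumfiel_pseudometric {F : Type*} [Field F] [LinearOrder F] [IsStrictOrderedRing F]
    -- `F` real closed:
    (hsq : ∀ a : F, 0 ≤ a → ∃ b : F, b ^ 2 = a)
    (hodd : ∀ p : Polynomial F, Odd p.natDegree → ∃ x : F, p.eval x = 0)
    (log : F → WithBot ℚ)
    (hzero : log 0 = ⊥)
    (hnebot : ∀ a : F, 0 < a → log a ≠ ⊥)
    (hmono : ∀ a b : F, 0 < a → a ≤ b → log a ≤ log b)
    (hsurj : ∀ q : ℚ, ∃ a : F, 0 < a ∧ log a = (q : WithBot ℚ))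
    (hmul : ∀ a b : F, 0 < a → 0 < b → log (a * b) = log a + log b)
    (hadd : ∀ a b : F, 0 < a → 0 < b → log (a + b) ≤ max (log a) (log b))
    (haddeq : ∀ a b : F, 0 < a → 0 < b → log a ≠ log b →
      log (a + b) = max (log a) (log b))
    -- the distance function on `H_F = {(x, y) : y > 0}`:
    (d : F × F → F × F → WithBot ℚ)
    (hd : ∀ z z' : F × F,
      d z z' = max (log ((z.1 - z'.1) ^ 2 / (z.2 * z'.2)))
          (max (log (z.2 / z'.2)) (log (z'.2 / z.2))) ⊔ 0) :
    ∀ z z' z'' : F × F, 0 < z.2 → 0 < z'.2 → 0 < z''.2 →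
      (0 ≤ d z z') ∧ (d z z = 0) ∧ (d z z' = d z' z) ∧
        (d z z'' ≤ d z z' + d z' z'') := by
  -- log 1 = 0
  have log_one : log (1 : F) = 0 := by
    have h := hmul 1 1 one_pos one_pos
    rw [mul_one] at h
    obtain ⟨q, hq⟩ := WithBot.ne_bot_iff_exists.1 (hnebot 1 one_pos)
    rw [← hq] at h
    have hq0 : q = q + q := by exact_mod_cast h
    have : q = 0 := by linarith
    rw [← hq, this]; rfl
  -- monotonicity from 0
  have lmono0 : ∀ a b : F, 0 ≤ a → a ≤ b → 0 < b → log a ≤ log b := by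
    intro a b ha hab hb
    rcases ha.lt_or_eq with h | h
    · exact hmono a b h hab
    · rw [← h, hzero]; exact bot_le
  -- log of a sum is the max of the logs
  have laddmax : ∀ a b : F, 0 ≤ a → 0 < b → log (a + b) = max (log a) (log b) := by
    intro a b ha hb
    rcases ha.lt_or_eq with h | h
    · exact le_antisymm (hadd a b h hb)
        (max_le (hmono a _ h (by linarith)) (hmono b _ hb (by linarith)))
    · rw [← h, zero_add, hzero]
      simp
  have log_two : log (2 : F) = 0 := by
    have h := laddmax 1 1 zero_le_one one_pos
    rw [log_one] at h
    norm_num at h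
    simpa using h
  have ldiv : ∀ a b : F, 0 ≤ a → 0 < b → log (a / b) + log b = log a := by
    intro a b ha hb
    rcases ha.lt_or_eq with h | h
    · rw [← hmul _ b (div_pos h hb) hb, div_mul_cancel₀ _ (ne_of_gt hb)]
    · rw [← h, zero_div, hzero]
      simp
  -- ultrametric bound for squares of sums
  have lsq : ∀ u v : F, log ((u + v) ^ 2) ≤ max (log (u ^ 2)) (log (v ^ 2)) := by
    intro u v
    rcases eq_or_ne v 0 with hv | hv
    · rw [hv, add_zero]
      exact le_max_left _ _
    · have hv2 : (0 : F) < v ^ 2 := by positivity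
      have step1 : log ((u + v) ^ 2) ≤ log (2 * u ^ 2 + 2 * v ^ 2) :=
        lmono0 _ _ (sq_nonneg _) (by nlinarith [sq_nonneg (u - v)]) (by positivity)
      have step2 : log (2 * u ^ 2 + 2 * v ^ 2) = max (log (2 * u ^ 2)) (log (2 * v ^ 2)) :=
        laddmax _ _ (by positivity) (by positivity)
      have e1 : log (2 * u ^ 2) = log (u ^ 2) := by
        rcases eq_or_ne u 0 with hu | hu
        · rw [hu]; norm_num
        · rw [hmul 2 (u ^ 2) two_pos (by positivity), log_two, zero_add]
      have e2 : log (2 * v ^ 2) = log (v ^ 2) := by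
        rw [hmul 2 (v ^ 2) two_pos hv2, log_two, zero_add]
      calc log ((u + v) ^ 2) ≤ log (2 * u ^ 2 + 2 * v ^ 2) := step1
        _ = max (log (u ^ 2)) (log (v ^ 2)) := by rw [step2, e1, e2]
  -- the "⊔ 0" is redundant
  have hge0 : ∀ a b : F, 0 < a → 0 < b →
      (0 : WithBot ℚ) ≤ max (log (a / b)) (log (b / a)) := by
    intro a b ha hb
    rcases le_total a b with h | h
    · refine le_max_of_le_right ?_
      rw [← log_one]
      exact hmono 1 _ one_pos ((one_le_div ha).2 h)
    · refine le_max_of_le_left ?_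
      rw [← log_one]
      exact hmono 1 _ one_pos ((one_le_div hb).2 h)
  have hsup : ∀ a b : WithBot ℚ, (0 : WithBot ℚ) ≤ b → max a b ⊔ 0 = max a b := by
    intro a b h
    exact sup_eq_left.2 (h.trans (le_max_right a b))
  -- the key valuation identity for d
  have hdval : ∀ w w' : F × F, 0 < w.2 → 0 < w'.2 →
      d w w' + (log w.2 + log w'.2)
        = log ((w.1 - w'.1) ^ 2 + (w.2 ^ 2 + w'.2 ^ 2)) := by
    intro w w' h2 h2'
    have e1 : log ((w.1 - w'.1) ^ 2 / (w.2 * w'.2)) + (log w.2 + log w'.2)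
        = log ((w.1 - w'.1) ^ 2) := by
      rw [← hmul _ _ h2 h2']
      exact ldiv _ _ (sq_nonneg _) (mul_pos h2 h2')
    have e2 : log (w.2 / w'.2) + (log w.2 + log w'.2) = log (w.2 ^ 2) := by
      have h' : log (w.2 / w'.2) + (log w.2 + log w'.2)
          = (log (w.2 / w'.2) + log w'.2) + log w.2 := by
        rw [add_assoc, add_comm (log w.2) (log w'.2)]
      rw [h', ldiv _ _ (le_of_lt h2) h2', pow_two, hmul _ _ h2 h2]
    have e3 : log (w'.2 / w.2) + (log w.2 + log w'.2) = log (w'.2 ^ 2) := by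
      have h' : log (w'.2 / w.2) + (log w.2 + log w'.2)
          = (log (w'.2 / w.2) + log w.2) + log w'.2 := by
        rw [add_assoc]
      rw [h', ldiv _ _ (le_of_lt h2') h2, pow_two, hmul _ _ h2' h2']
    rw [hd w w', hsup _ _ (hge0 _ _ h2 h2'), ← max_add_add_right, ← max_add_add_right,
      e1, e2, e3, laddmax ((w.1 - w'.1) ^ 2) _ (sq_nonneg _) (by positivity),
      laddmax (w.2 ^ 2) (w'.2 ^ 2) (sq_nonneg _) (by positivity)]
  intro z z' z'' hy hy' hy''
  refine ⟨?_, ?_, ?_, ?_⟩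
  · rw [hd]; exact le_sup_right
  · rw [hd, sub_self, div_self (ne_of_gt hy), log_one]
    norm_num [hzero]
  · rw [hd z z', hd z' z, show (z.1 - z'.1) ^ 2 = (z'.1 - z.1) ^ 2 by ring,
      mul_comm z.2 z'.2, max_comm (log (z.2 / z'.2))]
  · -- triangle inequality
    set S1 := (z.1 - z'.1) ^ 2 + (z.2 ^ 2 + z'.2 ^ 2) with hS1
    set S2 := (z'.1 - z''.1) ^ 2 + (z'.2 ^ 2 + z''.2 ^ 2) with hS2
    have hS1pos : 0 < S1 := by rw [hS1]; positivity
    have hS2pos : 0 < S2 := by rw [hS2]; positivity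
    have hy'sq : log z'.2 + log z'.2 = log (z'.2 ^ 2) := by
      rw [pow_two, hmul _ _ hy' hy']
    have key : log ((z.1 - z''.1) ^ 2 + (z.2 ^ 2 + z''.2 ^ 2)) + (log z'.2 + log z'.2)
        ≤ log S1 + log S2 := by
      rw [hy'sq,
        laddmax ((z.1 - z''.1) ^ 2) _ (sq_nonneg _) (by positivity),
        laddmax (z.2 ^ 2) (z''.2 ^ 2) (sq_nonneg _) (by positivity),
        ← max_add_add_right, ← max_add_add_right]
      have hA : log ((z.1 - z''.1) ^ 2)
          ≤ max (log ((z.1 - z'.1) ^ 2)) (log ((z'.1 - z''.1) ^ 2)) := by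
        rw [show z.1 - z''.1 = (z.1 - z'.1) + (z'.1 - z''.1) by ring]
        exact lsq _ _
      have hA1S1 : log ((z.1 - z'.1) ^ 2) ≤ log S1 :=
        lmono0 _ _ (sq_nonneg _) (by rw [hS1]; linarith [sq_nonneg z.2, sq_nonneg z'.2]) hS1pos
      have hA2S2 : log ((z'.1 - z''.1) ^ 2) ≤ log S2 :=
        lmono0 _ _ (sq_nonneg _) (by rw [hS2]; linarith [sq_nonneg z'.2, sq_nonneg z''.2]) hS2pos
      have hyS1 : log (z.2 ^ 2) ≤ log S1 :=
        lmono0 _ _ (sq_nonneg _) (by rw [hS1]; linarith [sq_nonneg (z.1 - z'.1), sq_nonneg z'.2]) hS1pos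
      have hy'S1 : log (z'.2 ^ 2) ≤ log S1 :=
        lmono0 _ _ (sq_nonneg _) (by rw [hS1]; linarith [sq_nonneg (z.1 - z'.1), sq_nonneg z.2]) hS1pos
      have hy'S2 : log (z'.2 ^ 2) ≤ log S2 :=
        lmono0 _ _ (sq_nonneg _) (by rw [hS2]; linarith [sq_nonneg (z'.1 - z''.1), sq_nonneg z''.2]) hS2pos
      have hy''S2 : log (z''.2 ^ 2) ≤ log S2 :=
        lmono0 _ _ (sq_nonneg _) (by rw [hS2]; linarith [sq_nonneg (z'.1 - z''.1), sq_nonneg z'.2]) hS2pos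
      refine max_le ?_ (max_le ?_ ?_)
      · calc log ((z.1 - z''.1) ^ 2) + log (z'.2 ^ 2)
            ≤ max (log ((z.1 - z'.1) ^ 2)) (log ((z'.1 - z''.1) ^ 2)) + log (z'.2 ^ 2) :=
              add_le_add_left hA _
          _ = max (log ((z.1 - z'.1) ^ 2) + log (z'.2 ^ 2))
              (log ((z'.1 - z''.1) ^ 2) + log (z'.2 ^ 2)) := (max_add_add_right _ _ _).symm
          _ ≤ log S1 + log S2 :=
              max_le (add_le_add hA1S1 hy'S2) (by
                rw [add_comm]
                exact add_le_add hy'S1 hA2S2)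
      · exact add_le_add hyS1 hy'S2
      · rw [add_comm]
        exact add_le_add hy'S1 hy''S2
    have h0 := hdval z z'' hy hy''
    have h1 := hdval z z' hy hy'
    have h2 := hdval z' z'' hy' hy''
    have hcne : (log z.2 + log z''.2) + (log z'.2 + log z'.2) ≠ (⊥ : WithBot ℚ) :=
      WithBot.add_ne_bot.2 ⟨WithBot.add_ne_bot.2 ⟨hnebot _ hy, hnebot _ hy''⟩,
        WithBot.add_ne_bot.2 ⟨hnebot _ hy', hnebot _ hy'⟩⟩
    rw [← WithBot.add_le_add_iff_right hcne]
    calc d z z'' + ((log z.2 + log z''.2) + (log z'.2 + log z'.2))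
        = (d z z'' + (log z.2 + log z''.2)) + (log z'.2 + log z'.2) := by
          abel
      _ = log ((z.1 - z''.1) ^ 2 + (z.2 ^ 2 + z''.2 ^ 2)) + (log z'.2 + log z'.2) := by
          rw [h0]
      _ ≤ log S1 + log S2 := key
      _ = (d z z' + (log z.2 + log z'.2)) + (d z' z'' + (log z'.2 + log z''.2)) := by
          rw [h1, h2]
      _ = (d z z' + d z' z'') + ((log z.2 + log z''.2) + (log z'.2 + log z'.2)) := by
          abel
end

section
/- In the field of real Puiseux series F, with t_n := -1 + 1/2^n, a_n := \sum_{k=1}^n X^{t_k}, b_n := X^{t_n}, the sequence p_n := a_n + i b_n in the upper half plane H_F satisfies d(p_n, p_m) = t_n - t_m for all n ≤ m; in particular (p_n) is a Cauchy sequence for the pseudo-metric d. -/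
/-!
We model the field `F` of real Puiseux series inside the field of Hahn series
`HahnSeries ℚ ℝ`, via the exponent-reversing identification `X^t ↦ single (-t) 1`
(so that the paper's `X` is infinitely large and the leading-exponent logarithm
is `f ↦ -f.order`).  A Hahn series is a (real) Puiseux series iff its support
has bounded denominator.
-/

noncomputable section

/-- The ambient Hahn series field. -/
abbrev Fh := HahnSeries ℚ ℝ

/-- The leading-exponent logarithm `log : F_{≠0} → ℚ` (junk value `0` at `0`). -/
def llog (f : Fh) : ℚ := -f.order

/-- The monomial `X^t` of the paper. -/
def Xp (t : ℚ) : Fh := HahnSeries.single (-t) 1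

/-- `f` is a real Puiseux series: the denominators of its support are bounded. -/
def IsPuiseux (f : Fh) : Prop :=
  ∃ m : ℕ, 0 < m ∧ ∀ q ∈ f.support, ∃ k : ℤ, q = (k : ℚ) / m

/-- `f > 0` in the ordered field `F`: the leading coefficient is positive. -/
def FPos (f : Fh) : Prop := f ≠ 0 ∧ 0 < f.coeff f.order

/-- `t n := -1 + 1/2^n`. -/
def tseq (n : ℕ) : ℚ := -1 + 1 / 2 ^ n

/-- `a n := ∑_{k=1}^n X^{t_k}`. -/
def aseq (n : ℕ) : Fh := ∑ k ∈ Finset.Icc 1 n, Xp (tseq k)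

/-- `b n := X^{t_n}`. -/
def bseq (n : ℕ) : Fh := Xp (tseq n)

/-- Brumfiel's pseudo-distance on the upper half plane `H_F`:
`d(x+iy, x'+iy') = log (((x-x')² + y² + y'²)/(y y'))`. -/
def dH (x y x' y' : Fh) : ℚ := llog (((x - x') ^ 2 + y ^ 2 + y' ^ 2) / (y * y'))

lemma Xp_ne_zero (t : ℚ) : Xp t ≠ 0 := HahnSeries.single_ne_zero one_ne_zero
lemma order_Xp (t : ℚ) : (Xp t).order = -t := HahnSeries.order_single one_ne_zero
lemma Xp_mul (s t : ℚ) : Xp s * Xp t = Xp (s + t) := by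
  simp [Xp, HahnSeries.single_mul_single, neg_add, add_comm]
lemma Xp_inv (s : ℚ) : (Xp s)⁻¹ = Xp (-s) := by
  refine inv_eq_of_mul_eq_one_right ?_
  rw [Xp_mul, add_neg_cancel, Xp, neg_zero, HahnSeries.single_zero_one]
lemma Xp_sq (t : ℚ) : Xp t ^ 2 = Xp (2 * t) := by
  rw [sq, Xp_mul, two_mul]
lemma sum_coeff {α : Type*} (s : Finset α) (f : α → Fh) (q : ℚ) :
    (∑ i ∈ s, f i).coeff q = ∑ i ∈ s, (f i).coeff q := by
  induction s using Finset.cons_induction <;> simp [*]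

lemma tseq_le {n m : ℕ} (h : n ≤ m) : tseq m ≤ tseq n := by
  unfold tseq
  have : (2:ℚ) ^ n ≤ 2 ^ m := pow_le_pow_right₀ (by norm_num) h
  have h1 : (0:ℚ) < 2 ^ n := by positivity
  have := one_div_le_one_div_of_le h1 this
  linarith

lemma tseq_lt {n m : ℕ} (h : n < m) : tseq m < tseq n := by
  unfold tseq
  have : (2:ℚ) ^ n < 2 ^ m := pow_lt_pow_right₀ (by norm_num) h
  have h1 : (0:ℚ) < 2 ^ n := by positivity
  have := one_div_lt_one_div_of_lt h1 this
  linarith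

lemma aseq_sub (n m : ℕ) (h : n ≤ m) :
    aseq m - aseq n = ∑ k ∈ Finset.Ioc n m, Xp (tseq k) := by
  have h0 : ∀ j, Finset.Icc 1 j = Finset.Ioc 0 j := fun j => Finset.Icc_add_one_left_eq_Ioc 0 j
  have hu : Finset.Ioc 0 n ∪ Finset.Ioc n m = Finset.Ioc 0 m :=
    Finset.Ioc_union_Ioc_eq_Ioc (Nat.zero_le n) h
  have hd : Disjoint (Finset.Ioc 0 n) (Finset.Ioc n m) := by
    simp [Finset.disjoint_left]
    intro a h1 h2 h3
    omega
  rw [aseq, aseq, h0, h0, ← hu, Finset.sum_union hd]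
  ring

lemma order_num (n m : ℕ) (h : n ≤ m) :
    ((aseq n - aseq m) ^ 2 + bseq n ^ 2 + bseq m ^ 2).order = -(2 * tseq n) ∧
    (aseq n - aseq m) ^ 2 + bseq n ^ 2 + bseq m ^ 2 ≠ 0 := by
  set D : Fh := aseq m - aseq n with hD
  set N : Fh := (aseq n - aseq m) ^ 2 + bseq n ^ 2 + bseq m ^ 2 with hN
  set c : ℚ := -(2 * tseq n) with hc
  have hNeq : N = D ^ 2 + Xp (2 * tseq n) + Xp (2 * tseq m) := by
    rw [hN, hD, bseq, bseq, Xp_sq, Xp_sq]; ring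
  -- support bound for D
  have hDsupp : ∀ q : ℚ, D.coeff q ≠ 0 → -tseq (n+1) ≤ q := by
    intro q hq
    rw [hD, aseq_sub n m h, sum_coeff] at hq
    obtain ⟨k, hk, hne⟩ := Finset.exists_ne_zero_of_sum_ne_zero hq
    have : q = -tseq k := by
      by_contra hqq
      exact hne (HahnSeries.coeff_single_of_ne hqq)
    rw [this]
    have : tseq k ≤ tseq (n+1) := tseq_le (Finset.mem_Ioc.mp hk).1
    linarith
  have hD2 : ∀ q : ℚ, q < -(2 * tseq (n+1)) → (D ^ 2).coeff q = 0 := by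
    intro q hq
    by_contra hne
    have hmem : q ∈ (D * D).support := by rwa [← sq, HahnSeries.mem_support]
    obtain ⟨a, ha, b, hb, hab⟩ := HahnSeries.support_mul_subset hmem
    rw [HahnSeries.mem_support] at ha hb
    have hab' : a + b = q := hab
    have h1 := hDsupp a ha
    have h2 := hDsupp b hb
    linarith
  have htlt : tseq (n+1) < tseq n := tseq_lt (Nat.lt_succ_self n)
  have hclt : c < -(2 * tseq (n+1)) := by rw [hc]; linarith
  -- coefficient at c is positive
  have hcoeffc : 0 < N.coeff c := by
    rw [hNeq]
    simp only [HahnSeries.coeff_add]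
    rw [hD2 c hclt]
    have h1 : (Xp (2 * tseq n)).coeff c = 1 := by
      rw [Xp, hc, HahnSeries.coeff_single_same]
    have h2 : (0:ℝ) ≤ (Xp (2 * tseq m)).coeff c := by
      rw [Xp, HahnSeries.coeff_single]
      split_ifs <;> norm_num
    rw [h1]; linarith
  have hcoeffne : N.coeff c ≠ 0 := ne_of_gt hcoeffc
  have hNne : N ≠ 0 := fun h0 => hcoeffne (by rw [h0]; simp)
  -- coefficients below c vanish
  have hbelow : ∀ q : ℚ, q < c → N.coeff q = 0 := by
    intro q hq
    have h1' : q ≠ -(2 * tseq n) := by rw [← hc]; exact ne_of_lt hq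
    have h2' : q ≠ -(2 * tseq m) := by
      have : tseq m ≤ tseq n := tseq_le h
      intro hqe
      rw [hqe, hc] at hq
      linarith
    rw [hNeq]
    simp only [HahnSeries.coeff_add, Xp]
    rw [hD2 q (lt_trans hq hclt), HahnSeries.coeff_single_of_ne h1',
      HahnSeries.coeff_single_of_ne h2']
    ring
  refine ⟨le_antisymm (HahnSeries.order_le_of_coeff_ne_zero hcoeffne) ?_, hNne⟩
  by_contra hlt
  push_neg at hlt
  exact hNne (HahnSeries.coeff_order_eq_zero.mp (hbelow _ hlt))

lemma dist_formula (n m : ℕ) (h : n ≤ m) :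
    dH (aseq n) (bseq n) (aseq m) (bseq m) = tseq n - tseq m := by
  obtain ⟨hord, hne⟩ := order_num n m h
  unfold dH llog
  rw [div_eq_mul_inv,
    show bseq n * bseq m = Xp (tseq n + tseq m) from by rw [bseq, bseq, Xp_mul],
    Xp_inv, HahnSeries.order_mul hne (Xp_ne_zero _), hord, order_Xp]
  ring

lemma dH_symm (x y x' y' : Fh) : dH x y x' y' = dH x' y' x y := by
  unfold dH
  rw [show ((x - x') ^ 2 + y ^ 2 + y' ^ 2) / (y * y')
      = ((x' - x) ^ 2 + y' ^ 2 + y ^ 2) / (y' * y) from by ring]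

/-- `d(p_n, p_m) = t_n - t_m` for `n ≤ m`, where `p_n = a_n + i b_n`; in
particular `(p_n)` is a Cauchy sequence for the pseudo-metric `d`. -/
theorem dist_p_eq_and_cauchy :
    (∀ n m : ℕ, n ≤ m →
      dH (aseq n) (bseq n) (aseq m) (bseq m) = tseq n - tseq m) ∧
    (∀ ε : ℚ, 0 < ε → ∃ N : ℕ, ∀ n m : ℕ, N ≤ n → N ≤ m →
      |dH (aseq n) (bseq n) (aseq m) (bseq m)| < ε) := by
  refine ⟨dist_formula, ?_⟩
  intro ε hε
  obtain ⟨N0, hN0⟩ := exists_pow_lt_of_lt_one hε (show (1/2:ℚ) < 1 by norm_num)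
  refine ⟨N0, ?_⟩
  have key : ∀ a b : ℕ, N0 ≤ a → a ≤ b →
      |dH (aseq a) (bseq a) (aseq b) (bseq b)| < ε := by
    intro a b ha hab
    rw [dist_formula a b hab, abs_of_nonneg (by linarith [tseq_le hab])]
    have h1 : tseq a - tseq b = 1/2^a - 1/2^b := by unfold tseq; ring
    have h2 : (0:ℚ) < 1/2^b := by positivity
    have h3 : (1:ℚ)/2^a ≤ (1/2)^N0 := by
      rw [div_pow, one_pow]
      refine one_div_le_one_div_of_le (by positivity) ?_
      exact pow_le_pow_right₀ (by norm_num) ha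
    linarith
  intro n m hn hm
  rcases le_total n m with hnm | hmn
  · exact key n m hn hnm
  · rw [dH_symm]; exact key m n hm hmn
end
end

section
/- In the upper half plane over the real Puiseux series, if d(x + iy, x' + iy) = 0 for some y > 0, then d(x + i(y+t), x' + i(y+t)) = 0 for all t ≥ 0. -/
/-!
We model the field `F` of real Puiseux series inside the field of Hahn series
`HahnSeries ℚ ℝ`, via the exponent-reversing identification `X^t ↦ single (-t) 1`
(so that the paper's `X` is infinitely large and the leading-exponent logarithm
is `f ↦ -f.order`).  A Hahn series is a (real) Puiseux series iff its support
has bounded denominator.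
-/

noncomputable section

lemma coeff_min_pos {f g : Fh} (hf : FPos f) (hg : FPos g) :
    0 < (f + g).coeff (min f.order g.order) := by
  rcases lt_trichotomy f.order g.order with h | h | h
  · rw [min_eq_left h.le, HahnSeries.coeff_add,
      HahnSeries.coeff_eq_zero_of_lt_order h, add_zero]
    exact hf.2
  · rw [min_eq_left h.le, HahnSeries.coeff_add]
    have := hg.2
    rw [← h] at this
    exact add_pos hf.2 this
  · rw [min_eq_right h.le, HahnSeries.coeff_add,
      HahnSeries.coeff_eq_zero_of_lt_order h, zero_add]
    exact hg.2

lemma fpos_add {f g : Fh} (hf : FPos f) (hg : FPos g) :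
    FPos (f + g) ∧ (f + g).order = min f.order g.order := by
  have hc := coeff_min_pos hf hg
  have hne : (f + g) ≠ 0 := HahnSeries.ne_zero_of_coeff_ne_zero hc.ne'
  have hle : (f + g).order ≤ min f.order g.order :=
    HahnSeries.order_le_of_coeff_ne_zero hc.ne'
  have hge : min f.order g.order ≤ (f + g).order := by
    by_contra hlt
    push_neg at hlt
    have h1 : (f + g).coeff (f + g).order = 0 := by
      rw [HahnSeries.coeff_add,
        HahnSeries.coeff_eq_zero_of_lt_order (lt_of_lt_of_le hlt (min_le_left _ _)),
        HahnSeries.coeff_eq_zero_of_lt_order (lt_of_lt_of_le hlt (min_le_right _ _)), add_zero]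
    exact hne (HahnSeries.coeff_order_eq_zero.mp h1)
  have heq : (f + g).order = min f.order g.order := le_antisymm hle hge
  exact ⟨⟨hne, by rw [heq]; exact hc⟩, heq⟩

lemma fpos_mul {f g : Fh} (hf : FPos f) (hg : FPos g) : FPos (f * g) := by
  have hne : f * g ≠ 0 := mul_ne_zero hf.1 hg.1
  refine ⟨hne, ?_⟩
  have h := HahnSeries.coeff_mul_order_add_order f g
  rw [HahnSeries.leadingCoeff_eq, HahnSeries.leadingCoeff_eq] at h
  rw [HahnSeries.order_mul hf.1 hg.1, h]
  exact mul_pos hf.2 hg.2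

/-- If `d(x+iy, x'+iy) = 0` for some `y > 0`, then
`d(x+i(y+t), x'+i(y+t)) = 0` for all `t ≥ 0` (i.e. `t = 0` or `t > 0`). -/
theorem dist_zero_above :
    ∀ x x' y t : Fh, FPos y → dH x y x' y = 0 → (t = 0 ∨ FPos t) →
      dH x (y + t) x' (y + t) = 0 := by
  intro x x' y t hy hd ht
  rcases ht with rfl | ht
  · simpa using hd
  -- setup
  have hy' : FPos (y + t) ∧ (y + t).order = min y.order t.order := fpos_add hy ht
  set y' := y + t with hy'def
  have horder_le : y'.order ≤ y.order := hy'.2 ▸ min_le_left _ _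
  have hyy : FPos (y * y) := fpos_mul hy hy
  have hyy' : FPos (y' * y') := fpos_mul hy'.1 hy'.1
  set s : Fh := (x - x') ^ 2 with hs
  have hs2 : s = (x - x') * (x - x') := sq (x - x')
  -- llog of quotient
  have key : ∀ D N : Fh, FPos D → FPos N → (llog (N / D) = 0 ↔ N.order = D.order) := by
    intro D N hD hN
    have hq : N / D ≠ 0 := div_ne_zero hN.1 hD.1
    have hmul : (N / D) * D = N := div_mul_cancel₀ _ hD.1
    have horder : N.order = (N / D).order + D.order := by
      conv_lhs => rw [← hmul]
      exact HahnSeries.order_mul hq hD.1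
    unfold llog
    constructor
    · intro h
      have : (N / D).order = 0 := by linarith [neg_eq_zero.mp h]
      rw [horder, this, zero_add]
    · intro h
      have : (N / D).order = 0 := by
        have := horder
        rw [h] at this
        linarith
      rw [this, neg_zero]
  have fpos_sq : ∀ f : Fh, f ≠ 0 → FPos (f * f) := by
    intro f hf
    refine ⟨mul_ne_zero hf hf, ?_⟩
    have h := HahnSeries.coeff_mul_order_add_order f f
    rw [HahnSeries.leadingCoeff_eq] at h
    rw [HahnSeries.order_mul hf hf, h]
    exact mul_self_pos.mpr (mt HahnSeries.coeff_order_eq_zero.mp hf)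
  have Py2 : FPos (y ^ 2) := by rw [pow_two]; exact fpos_sq y hy.1
  have Py'2 : FPos (y' ^ 2) := by rw [pow_two]; exact fpos_sq y' hy'.1.1
  have hoy2 : (y ^ 2).order = (y * y).order := by rw [pow_two]
  have hoy'2 : (y' ^ 2).order = (y' * y').order := by rw [pow_two]
  have h2le : (y' ^ 2).order ≤ (y ^ 2).order := by
    rw [pow_two, pow_two, HahnSeries.order_mul hy'.1.1 hy'.1.1, HahnSeries.order_mul hy.1 hy.1]
    linarith
  rcases eq_or_ne (x - x') 0 with hxx | hxx
  · -- s = 0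
    unfold dH
    rw [hxx]
    have hadd := fpos_add Py'2 Py'2
    have : (0 : Fh) ^ 2 + y' ^ 2 + y' ^ 2 = y' ^ 2 + y' ^ 2 := by ring
    rw [this, key _ _ hyy' hadd.1, hadd.2, min_self, hoy'2]
  · have hsP : FPos s := by rw [hs2]; exact fpos_sq _ hxx
    have NA := fpos_add hsP Py2
    have NB := fpos_add NA.1 Py2
    unfold dH at hd
    rw [← hs, key _ _ hyy NB.1, NB.2, NA.2] at hd
    have hble : (y ^ 2).order ≤ s.order := by
      rw [min_assoc, min_self] at hd
      rw [← hoy2] at hd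
      exact min_eq_right_iff.mp hd
    have NA' := fpos_add hsP Py'2
    have NB' := fpos_add NA'.1 Py'2
    unfold dH
    rw [← hs, key _ _ hyy' NB'.1, NB'.2, NA'.2, min_assoc, min_self, ← hoy'2]
    exact min_eq_right_iff.mpr (le_trans h2le hble)
end
end

section
/- For the vertical lines ℓ_n = a_n + i F_{>0} in the Puiseux upper half-plane: if b ∈ F_{>0} with log(b) ≥ t_{n+1}, then d(a_n + ib, a_{n+1} + ib) = 0. -/
/-!
We model the field `F` of real Puiseux series inside the field of Hahn series
`HahnSeries ℚ ℝ`, via the exponent-reversing identification `X^t ↦ single (-t) 1`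
(so that the paper's `X` is infinitely large and the leading-exponent logarithm
is `f ↦ -f.order`).  A Hahn series is a (real) Puiseux series iff its support
has bounded denominator.
-/

noncomputable section

/-- If `b > 0` with `log b ≥ t_{n+1}`, then `d(a_n + ib, a_{n+1} + ib) = 0`. -/
theorem dist_zero_of_log_ge :
    ∀ (n : ℕ) (b : Fh), FPos b → tseq (n + 1) ≤ llog b →
      dH (aseq n) b (aseq (n + 1)) b = 0 := by
  intro n b ⟨hb, hc⟩ hlog
  set o := b.order with ho
  set s : ℚ := -tseq (n + 1) with hs
  have hos : o ≤ s := by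
    have : tseq (n+1) ≤ -o := hlog
    linarith
  -- the difference
  have hdiff : aseq n - aseq (n + 1) = -Xp (tseq (n + 1)) := by
    rw [aseq, aseq, Finset.sum_Icc_succ_top (by omega : 1 ≤ n + 1)]
    ring
  have hsq : (aseq n - aseq (n + 1)) ^ 2 = HahnSeries.single (s + s) 1 := by
    rw [hdiff, show (-Xp (tseq (n+1))) ^ 2 = Xp (tseq (n+1)) * Xp (tseq (n+1)) by ring,
      Xp, HahnSeries.single_mul_single, one_mul]
  set N : Fh := (aseq n - aseq (n+1)) ^ 2 + b ^ 2 + b ^ 2 with hN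
  have hbb : b ^ 2 = b * b := sq b
  have horderbb : (b * b).order = o + o := HahnSeries.order_mul hb hb
  have hlc : b.leadingCoeff = b.coeff o := by
    exact HahnSeries.leadingCoeff_eq
  have hcoeffN : N.coeff (o + o) = (if o + o = s + s then (1:ℝ) else 0) + 2 * (b.coeff o) ^ 2 := by
    have h1 : (b * b).coeff (o + o) = b.coeff o * b.coeff o := by
      have := HahnSeries.coeff_mul_order_add_order b b
      rwa [hlc, ← ho] at this
    rw [hN, hsq, hbb]
    simp only [HahnSeries.coeff_add, h1, HahnSeries.coeff_single]
    ring
  have hcpos : (0:ℝ) < (if o + o = s + s then (1:ℝ) else 0) + 2 * (b.coeff o) ^ 2 := by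
    have := sq_pos_of_ne_zero (ne_of_gt hc)
    split <;> nlinarith
  have hcN : N.coeff (o + o) ≠ 0 := by rw [hcoeffN]; exact ne_of_gt hcpos
  have hNne : N ≠ 0 := fun h => hcN (by simp [h])
  have hlow : ∀ q < o + o, N.coeff q = 0 := by
    intro q hq
    have h1 : (HahnSeries.single (s + s) (1:ℝ)).coeff q = 0 := by
      rw [HahnSeries.coeff_single_of_ne]
      exact ne_of_lt (lt_of_lt_of_le hq (add_le_add hos hos))
    have h2 : (b * b).coeff q = 0 :=
      HahnSeries.coeff_eq_zero_of_lt_order (by rw [horderbb]; exact hq)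
    rw [hN, hsq, hbb]
    simp [h1, h2]
  have hordN : N.order = o + o := by
    refine le_antisymm (HahnSeries.order_le_of_coeff_ne_zero hcN) ?_
    by_contra h
    push_neg at h
    exact (mt HahnSeries.coeff_order_eq_zero.mp hNne) (hlow _ h)
  -- now the division
  have hbbne : b * b ≠ 0 := mul_ne_zero hb hb
  have hdivne : N / (b * b) ≠ 0 := div_ne_zero hNne hbbne
  have hmul : N / (b * b) * (b * b) = N := div_mul_cancel₀ N hbbne
  have hkey := HahnSeries.order_mul hdivne hbbne
  rw [hmul, hordN, horderbb] at hkey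
  have hord0 : (N / (b * b)).order = 0 := by linarith
  show llog (((aseq n - aseq (n+1)) ^ 2 + b ^ 2 + b ^ 2) / (b * b)) = 0
  rw [← hN, llog, hord0, neg_zero]
end
end

section
/- There is no real Puiseux series a such that log|a - a_n| ≤ t_n for all n ∈ ℕ, where a_n = \sum_{k=1}^n X^{t_k} and t_n = -1 + 1/2^n. -/
/-!
We model the field `F` of real Puiseux series inside the field of Hahn series
`HahnSeries ℚ ℝ`, via the exponent-reversing identification `X^t ↦ single (-t) 1`
(so that the paper's `X` is infinitely large and the leading-exponent logarithm
is `f ↦ -f.order`).  A Hahn series is a (real) Puiseux series iff its support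
has bounded denominator.
-/

noncomputable section

lemma tseq_strictAnti : StrictAnti tseq := by
  intro i j hij
  unfold tseq
  have : (2:ℚ)^i < 2^j := by
    exact_mod_cast pow_lt_pow_right₀ (by norm_num) hij
  have h1 : (0:ℚ) < 2^i := by positivity
  have h2 : (0:ℚ) < 2^j := by positivity
  have := one_div_lt_one_div_of_lt h1 this
  linarith

lemma aseq_coeff {n k : ℕ} (hk1 : 1 ≤ k) (hkn : k ≤ n) :
    (aseq n).coeff (-tseq k) = 1 := by
  unfold aseq
  have : (∑ i ∈ Finset.Icc 1 n, Xp (tseq i)).coeff (-tseq k)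
      = ∑ i ∈ Finset.Icc 1 n, (Xp (tseq i)).coeff (-tseq k) :=
    map_sum (HahnSeries.coeff.addMonoidHom (-tseq k)) _ _
  rw [this]
  rw [Finset.sum_eq_single k]
  · simp [Xp, HahnSeries.coeff_single_same]
  · intro b _ hb
    simp only [Xp]
    rw [HahnSeries.coeff_single_of_ne]
    simp only [ne_eq, neg_inj]
    exact fun h => hb (tseq_strictAnti.injective h.symm)
  · intro h
    exact absurd (Finset.mem_Icc.mpr ⟨hk1, hkn⟩) h


/-- There is no real Puiseux series `a` with `log |a - a_n| ≤ t_n` for all `n`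
(where `log 0 = -∞`, so the condition reads `a = a_n` or `log (a - a_n) ≤ t_n`). -/
theorem no_puiseux_limit :
    ¬ ∃ a : Fh, IsPuiseux a ∧
      ∀ n : ℕ, a = aseq n ∨ llog (a - aseq n) ≤ tseq n := by
  rintro ⟨a, ⟨m, hm, hsup⟩, h⟩
  -- Step 1: a.coeff (-tseq k) = 1 for all k ≥ 1
  have key : ∀ k : ℕ, 1 ≤ k → a.coeff (-tseq k) = 1 := by
    intro k hk
    rcases h (k+1) with heq | hle
    · rw [heq]; exact aseq_coeff hk (by omega)
    · have hlt : (-tseq k) < (a - aseq (k+1)).order := by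
        have : -tseq (k+1) ≤ (a - aseq (k+1)).order := by
          unfold llog at hle; linarith
        have h2 : -tseq k < -tseq (k+1) := by
          have := tseq_strictAnti (show k < k+1 by omega); linarith
        linarith
      have hz : (a - aseq (k+1)).coeff (-tseq k) = 0 :=
        HahnSeries.coeff_eq_zero_of_lt_order hlt
      rw [HahnSeries.coeff_sub] at hz
      have := aseq_coeff hk (show k ≤ k+1 by omega)
      linarith
  -- Step 2: contradiction on denominators. Take k = m.
  have hk1 : 1 ≤ m := hm
  have hmem : (-tseq m) ∈ a.support := by
    rw [HahnSeries.mem_support, key m hk1]; norm_num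
  obtain ⟨j, hj⟩ := hsup _ hmem
  -- -tseq m = 1 - 1/2^m = j/m
  have h2m : (m:ℚ) < 2^m := by exact_mod_cast (Nat.lt_two_pow_self (n := m))
  have hmpos : (0:ℚ) < m := by exact_mod_cast hm
  have hj' : (1 : ℚ) - 1/2^m = (j:ℚ)/m := by
    rw [← hj]; unfold tseq; ring
  -- so m - m/2^m = j, i.e. m/2^m = m - j ∈ ℤ, but 0 < m/2^m < 1
  have : (m:ℚ)/2^m = (m:ℚ) - j := by
    field_simp at hj' ⊢
    linarith [hj']
  have h0 : (0:ℚ) < (m:ℚ) - j := by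
    rw [← this]; positivity
  have h1 : (m:ℚ) - j < 1 := by
    rw [← this]
    rw [div_lt_one (by positivity)]
    exact h2m
  have : (0:ℚ) < (m:ℤ) - j := by push_cast; linarith
  have : ((m:ℤ) - j : ℚ) < 1 := by push_cast; linarith
  have hint : (1:ℤ) ≤ (m:ℤ) - j := by
    have : (0:ℤ) < (m:ℤ) - j := by exact_mod_cast ‹(0:ℚ) < (m:ℤ) - j›
    omega
  have : (1:ℚ) ≤ ((m:ℤ) - j : ℚ) := by exact_mod_cast hint
  linarith
end
end
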